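/- There exists an absolute constant C > 0 such that for all integers n ≥ 1 and K ≥ 1 and every u = (u_1,…,u_K) ∈ 𝔖: |D(u)| ≥ exp( (1/2)·( ∑_{ℓ=1}^K log(max{u_ℓ,1}) − max_{ℓ∈[K]} log(max{u_ℓ,1}) ) − C·K ). -/

import Mathlib

open BigOperators

noncomputable def rhoFn (u v : ℝ) : ℝ :=
  (u + v) * Real.log (u + v) - u * Real.log u - v * Real.log v

lemma half_term (u s : ℝ) (hu : 0 ≤ u) (hs : 0 < s) :
    u * Real.log u - u * Real.log s + u * Real.log 2 ≤ u * (2 * u - s) / s := by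
  rcases eq_or_lt_of_le hu with h | h
  · simp [← h]
  · have h2 : (0:ℝ) < 2 * u / s := by positivity
    have hlog := Real.log_le_sub_one_of_pos h2
    have hl : Real.log (2 * u / s) = Real.log 2 + Real.log u - Real.log s := by
      rw [Real.log_div (by positivity) (ne_of_gt hs), Real.log_mul (by norm_num) (ne_of_gt h)]
    have := mul_le_mul_of_nonneg_left hlog hu
    rw [hl] at this
    calc u * Real.log u - u * Real.log s + u * Real.log 2
        = u * (Real.log 2 + Real.log u - Real.log s) := by ring
      _ ≤ u * (2 * u / s - 1) := this
      _ = u * (2 * u - s) / s := by field_simp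

lemma rho_ge (u v : ℝ) (hu : 0 ≤ u) (hv : 0 ≤ v) :
    (u + v) * Real.log 2 - (u - v)^2 / (u + v) ≤ rhoFn u v := by
  rcases eq_or_lt_of_le (by positivity : (0:ℝ) ≤ u + v) with h | hs
  · have hu0 : u = 0 := by linarith
    have hv0 : v = 0 := by linarith
    simp [rhoFn, hu0, hv0]
  · have h1 := half_term u (u + v) hu hs
    have h2 := half_term v (u + v) hv hs
    have key : u * Real.log u + v * Real.log v - (u+v) * Real.log (u+v) + (u+v) * Real.log 2
        ≤ (u - v)^2 / (u + v) := by
      have : u * (2*u - (u+v)) / (u+v) + v * (2*v - (u+v)) / (u+v) = (u-v)^2/(u+v) := by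
        field_simp; ring
      nlinarith [h1, h2]
    unfold rhoFn
    linarith

lemma prev_val {K : ℕ} [NeZero K] (i : Fin K) :
    ((i - 1 : Fin K) : ℕ) = if (i:ℕ) = 0 then K - 1 else (i:ℕ) - 1 := by
  have hK : 1 ≤ K := Nat.one_le_iff_ne_zero.mpr (NeZero.ne K)
  rw [Fin.sub_def]
  simp only [Fin.val_one']
  have hi := i.isLt
  rcases Nat.eq_or_lt_of_le hK with h | h
  · have h1 : 1 % K = 0 := by simp [← h]
    rw [h1]
    have h0 : (i:ℕ) = 0 := by omega
    simp [h0, ← h]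
  · have h1 : 1 % K = 1 := Nat.mod_eq_of_lt h
    rw [h1]
    by_cases h0 : (i:ℕ) = 0
    · rw [h0, if_pos rfl, Nat.add_zero, Nat.mod_eq_of_lt (by omega)]
    · rw [if_neg h0]
      have h2 : K - 1 + (i:ℕ) = (i:ℕ) - 1 + K := by omega
      rw [h2, Nat.add_mod_right, Nat.mod_eq_of_lt (by omega)]

lemma sqrt_half_bound (m : ℕ) :
    Real.sqrt ((max m 1 : ℕ) : ℝ) / 2 ≤ ((Nat.sqrt m / 2 : ℕ) : ℝ) + 1 := by
  by_cases hw : m = 0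
  · subst hw
    norm_num
  · have hmax : max m 1 = m := max_eq_left (Nat.one_le_iff_ne_zero.mpr hw)
    rw [hmax]
    have h0 := Nat.lt_succ_sqrt m
    have h1 : ((m : ℕ) : ℝ) < ((Nat.sqrt m : ℝ) + 1)^2 := by
      have h2 : ((m : ℕ) : ℝ) < (((Nat.sqrt m + 1) * (Nat.sqrt m + 1) : ℕ) : ℝ) := by
        exact_mod_cast h0
      push_cast at h2
      nlinarith
    have h2 : Real.sqrt ((m : ℕ) : ℝ) < (Nat.sqrt m : ℝ) + 1 :=
      (Real.sqrt_lt' (by positivity)).mpr h1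
    have h3 : (Nat.sqrt m : ℝ) ≤ 2 * ((Nat.sqrt m / 2 : ℕ) : ℝ) + 1 := by
      have h4 : Nat.sqrt m ≤ 2 * (Nat.sqrt m / 2) + 1 := by omega
      exact_mod_cast h4
    linarith

lemma log_half_bound (m : ℕ) :
    Real.log ((max m 1 : ℕ) : ℝ) / 2 - Real.log 2
      ≤ Real.log ((Nat.sqrt m / 2 + 1 : ℕ) : ℝ) := by
  have hpos : (0:ℝ) < ((max m 1 : ℕ) : ℝ) := by
    have : (1:ℕ) ≤ max m 1 := le_max_right _ _
    exact_mod_cast Nat.lt_of_lt_of_le Nat.zero_lt_one this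
  have hs : (0:ℝ) < Real.sqrt ((max m 1 : ℕ) : ℝ) := Real.sqrt_pos.mpr hpos
  have h1 : Real.log (Real.sqrt ((max m 1 : ℕ) : ℝ) / 2)
      ≤ Real.log ((Nat.sqrt m / 2 + 1 : ℕ) : ℝ) := by
    apply Real.log_le_log (by positivity)
    have h0 : ((Nat.sqrt m / 2 + 1 : ℕ) : ℝ) = ((Nat.sqrt m / 2 : ℕ) : ℝ) + 1 := by
      push_cast; ring
    rw [h0]
    exact sqrt_half_bound m
  have h2 : Real.log (Real.sqrt ((max m 1 : ℕ) : ℝ) / 2)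
      = Real.log ((max m 1 : ℕ) : ℝ) / 2 - Real.log 2 := by
    rw [Real.log_div (ne_of_gt hs) (by norm_num),
      Real.log_sqrt (le_of_lt hpos)]
  linarith

lemma sq_quarter_bound (m : ℕ) : ((Nat.sqrt m / 2 : ℕ) : ℝ)^2 ≤ (m : ℝ)/4 := by
  have h1 : ((Nat.sqrt m / 2 : ℕ) : ℝ) ≤ (Nat.sqrt m : ℝ)/2 := by
    have := Nat.cast_div_le (α := ℝ) (m := Nat.sqrt m) (n := 2)
    simpa using this
  have h2 : ((Nat.sqrt m : ℝ))^2 ≤ (m : ℝ) := by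
    have h := Nat.sqrt_le' m
    have h3 : ((Nat.sqrt m ^ 2 : ℕ) : ℝ) ≤ ((m : ℕ) : ℝ) := Nat.cast_le.mpr h
    push_cast at h3
    nlinarith
  have h0 : (0:ℝ) ≤ ((Nat.sqrt m / 2 : ℕ) : ℝ) := Nat.cast_nonneg _
  nlinarith

theorem statement16 :
    ∃ C : ℝ, 0 < C ∧
      ∀ (n K : ℕ), 1 ≤ n → 1 ≤ K →
        ∀ u : Fin K → ℕ, (∑ ℓ, u ℓ = n - 1) →
          Real.exp ((1 / 2) *
              ((∑ ℓ, Real.log (max (u ℓ) 1 : ℕ)) - ⨆ ℓ, Real.log (max (u ℓ) 1 : ℕ))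
            - C * K) ≤
          (Nat.card {v : Fin K → ℕ //
              (∑ ℓ, v ℓ = n - 1) ∧
              2 * Real.log 2 * ((n : ℝ) - 1) - K / 4 ≤ ∑ ℓ, rhoFn (u ℓ) (v ℓ) ∧
              (∑ ℓ, Real.log (max (v ℓ) 1 : ℕ)) ≤
                K * Real.log 2 + ∑ ℓ, Real.log (max (u ℓ) 1 : ℕ)} : ℝ) := by
  classical
  refine ⟨Real.log 2, Real.log_pos (by norm_num), ?_⟩
  intro n K hn hK u hsum
  haveI : NeZero K := ⟨by omega⟩
  set σ : Equiv.Perm (Fin K) := Tuple.sort u with hσ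
  set w : Fin K → ℕ := fun i => u (σ i) with hwdef
  have hwmono : Monotone w := Tuple.monotone_sort u
  set a : Fin K → ℕ := fun i => Nat.sqrt (w i) / 2 with hadef
  have hamono : Monotone a := fun i j hij =>
    Nat.div_le_div_right (Nat.sqrt_le_sqrt (hwmono hij))
  have haw : ∀ i, a i ≤ w i := fun i =>
    le_trans (Nat.div_le_self _ _) (Nat.sqrt_le_self _)
  have hlastlt : K - 1 < K := by omega
  set lst : Fin K := ⟨K-1, hlastlt⟩ with hlst
  have hle_lst : ∀ i : Fin K, i ≤ lst := by
    intro i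
    have := i.isLt
    exact Fin.mk_le_mk.mpr (by omega) |>.trans_eq rfl
  set b : Fin K → ℕ := fun i => if i = lst then 0 else a i with hbdef
  have hba : ∀ i, b i ≤ a i := by
    intro i; by_cases h : i = lst <;> simp [hbdef, h]
  set Dset : Finset (Fin K → ℕ) := Fintype.piFinset (fun i => Finset.Iic (b i)) with hDdef
  have hmemD : ∀ d, d ∈ Dset → ∀ i, d i ≤ b i := by
    intro d hd i
    exact Finset.mem_Iic.mp (Fintype.mem_piFinset.mp hd i)
  set vmk : (Fin K → ℕ) → (Fin K → ℕ) := fun d i => w i - d i + d (i - 1) with hvdef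
  set Φ : (Fin K → ℕ) → (Fin K → ℕ) := fun d ℓ => vmk d (σ.symm ℓ) with hΦdef
  -- basic facts for d ∈ Dset
  have hdlast : ∀ d, d ∈ Dset → d lst = 0 := by
    intro d hd
    have := hmemD d hd lst
    simpa [hbdef] using this
  have hdprev : ∀ d, d ∈ Dset → ∀ i : Fin K, d (i - 1) ≤ a i := by
    intro d hd i
    by_cases h0 : (i : ℕ) = 0
    · have hv : (i - 1 : Fin K) = lst := by
        apply Fin.ext
        rw [prev_val i, if_pos h0]
      rw [hv, hdlast d hd]
      exact Nat.zero_le _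
    · have hle : (i - 1 : Fin K) ≤ i := by
        rw [Fin.le_def, prev_val i, if_neg h0]
        omega
      exact le_trans (hmemD d hd _) (le_trans (hba _) (hamono hle))
  have hvmk_add : ∀ d, d ∈ Dset → ∀ i, vmk d i + d i = w i + d (i - 1) := by
    intro d hd i
    have h1 : d i ≤ w i := le_trans (hmemD d hd i) (le_trans (hba i) (haw i))
    simp only [hvdef]
    omega
  -- sum of vmk
  have hsumw : ∑ i, w i = n - 1 := by
    rw [hwdef, Equiv.sum_comp σ u, hsum]
  have hsumprev : ∀ d : Fin K → ℕ, ∑ i, d (i - 1) = ∑ i, d i := by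
    intro d
    exact Equiv.sum_comp (Equiv.subRight (1 : Fin K)) d
  have hsumv : ∀ d, d ∈ Dset → ∑ i, vmk d i = n - 1 := by
    intro d hd
    have h1 : ∑ i, (vmk d i + d i) = ∑ i, (w i + d (i - 1)) :=
      Finset.sum_congr rfl fun i _ => hvmk_add d hd i
    simp only [Finset.sum_add_distrib] at h1
    rw [hsumprev d] at h1
    omega
  -- cast facts
  have hn1 : ((n - 1 : ℕ) : ℝ) = (n : ℝ) - 1 := by
    rw [Nat.cast_sub hn]; simp
  have hsq : ∀ i, ((a i : ℕ) : ℝ)^2 ≤ (w i : ℝ)/4 := by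
    intro i
    exact sq_quarter_bound (w i)
  have hcast_v : ∀ d, d ∈ Dset → ∀ i,
      (vmk d i : ℝ) = (w i : ℝ) - (d i : ℝ) + (d (i-1) : ℝ) := by
    intro d hd i
    have h := hvmk_add d hd i
    have : ((vmk d i + d i : ℕ) : ℝ) = ((w i + d (i-1) : ℕ) : ℝ) := by rw [h]
    push_cast at this
    linarith
  -- condition 1, per term
  have hcond1 : ∀ d, d ∈ Dset → ∀ i,
      ((w i : ℝ) + (vmk d i : ℝ)) * Real.log 2 - 1/4 ≤ rhoFn (w i) (vmk d i) := by
    intro d hd i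
    have hkey := rho_ge (w i) (vmk d i) (Nat.cast_nonneg _) (Nat.cast_nonneg _)
    have hda : (d i : ℝ) ≤ (a i : ℝ) :=
      Nat.cast_le.mpr (le_trans (hmemD d hd i) (hba i))
    have hpa : (d (i-1) : ℝ) ≤ (a i : ℝ) := Nat.cast_le.mpr (hdprev d hd i)
    have hdiff : ((w i : ℝ) - (vmk d i : ℝ))^2 ≤ ((a i : ℝ))^2 := by
      rw [hcast_v d hd i]
      have h0 : (0:ℝ) ≤ (d i : ℝ) := Nat.cast_nonneg _
      have h0' : (0:ℝ) ≤ (d (i-1) : ℝ) := Nat.cast_nonneg _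
      have h0a : (0:ℝ) ≤ (a i : ℝ) := Nat.cast_nonneg _
      nlinarith
    have hdivle : ((w i : ℝ) - (vmk d i : ℝ))^2 / ((w i : ℝ) + (vmk d i : ℝ)) ≤ 1/4 := by
      rcases eq_or_lt_of_le (by positivity : (0:ℝ) ≤ (w i : ℝ) + (vmk d i : ℝ)) with h | h
      · have hw0 : ((w i : ℕ) : ℝ) = 0 := by
          have := Nat.cast_nonneg (α := ℝ) (w i)
          have := Nat.cast_nonneg (α := ℝ) (vmk d i)
          linarith
        have hv0 : ((vmk d i : ℕ) : ℝ) = 0 := by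
          have := Nat.cast_nonneg (α := ℝ) (w i)
          linarith
        simp [hw0, hv0]
      · rw [div_le_iff₀ h]
        have h1 : ((a i : ℝ))^2 ≤ (w i : ℝ)/4 := hsq i
        have h2 : (0:ℝ) ≤ (vmk d i : ℝ) := Nat.cast_nonneg _
        nlinarith
    linarith
  -- condition 1, total
  have hC1 : ∀ d, d ∈ Dset →
      2 * Real.log 2 * ((n:ℝ) - 1) - (K:ℝ)/4 ≤ ∑ ℓ, rhoFn (u ℓ) (Φ d ℓ) := by
    intro d hd
    have hre : ∑ ℓ, rhoFn (u ℓ) (Φ d ℓ) = ∑ i, rhoFn (w i) (vmk d i) := by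
      rw [← Equiv.sum_comp σ (fun ℓ => rhoFn (u ℓ) (Φ d ℓ))]
      refine Finset.sum_congr rfl fun i _ => ?_
      simp [hΦdef, hwdef]
    rw [hre]
    have hsumwr : ∑ i, ((w i : ℝ) + (vmk d i : ℝ)) = 2 * ((n:ℝ) - 1) := by
      rw [Finset.sum_add_distrib]
      have e1 : ∑ i, ((w i : ℕ) : ℝ) = ((n - 1 : ℕ) : ℝ) := by
        rw [← Nat.cast_sum, hsumw]
      have e2 : ∑ i, ((vmk d i : ℕ) : ℝ) = ((n - 1 : ℕ) : ℝ) := by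
        rw [← Nat.cast_sum, hsumv d hd]
      rw [e1, e2, hn1]; ring
    calc 2 * Real.log 2 * ((n:ℝ) - 1) - (K:ℝ)/4
        = ∑ i, (((w i : ℝ) + (vmk d i : ℝ)) * Real.log 2 - 1/4) := by
          rw [Finset.sum_sub_distrib, ← Finset.sum_mul, hsumwr, Finset.sum_const,
            Finset.card_univ, Fintype.card_fin]
          ring
      _ ≤ ∑ i, rhoFn (w i) (vmk d i) :=
          Finset.sum_le_sum fun i _ => hcond1 d hd i
  -- condition 2
  have h2nat : ∀ d, d ∈ Dset → ∀ i, max (vmk d i) 1 ≤ 2 * max (w i) 1 := by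
    intro d hd i
    have h1 : d i ≤ w i := le_trans (hmemD d hd i) (le_trans (hba i) (haw i))
    have h2 : d (i-1) ≤ a i := hdprev d hd i
    have h3 : a i ≤ w i := haw i
    have h4 := hvmk_add d hd i
    omega
  have hC2 : ∀ d, d ∈ Dset →
      ∑ ℓ, Real.log ((max (Φ d ℓ) 1 : ℕ) : ℝ) ≤
        (K:ℝ) * Real.log 2 + ∑ ℓ, Real.log ((max (u ℓ) 1 : ℕ) : ℝ) := by
    intro d hd
    have hre : ∑ ℓ, Real.log ((max (Φ d ℓ) 1 : ℕ) : ℝ)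
        = ∑ i, Real.log ((max (vmk d i) 1 : ℕ) : ℝ) := by
      rw [← Equiv.sum_comp σ (fun ℓ => Real.log ((max (Φ d ℓ) 1 : ℕ) : ℝ))]
      refine Finset.sum_congr rfl fun i _ => ?_
      simp [hΦdef]
    have hre2 : ∑ ℓ, Real.log ((max (u ℓ) 1 : ℕ) : ℝ)
        = ∑ i, Real.log ((max (w i) 1 : ℕ) : ℝ) := by
      rw [← Equiv.sum_comp σ (fun ℓ => Real.log ((max (u ℓ) 1 : ℕ) : ℝ))]
    rw [hre, hre2]
    have hterm : ∀ i, Real.log ((max (vmk d i) 1 : ℕ) : ℝ) ≤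
        Real.log 2 + Real.log ((max (w i) 1 : ℕ) : ℝ) := by
      intro i
      have h1 : ((max (vmk d i) 1 : ℕ) : ℝ) ≤ ((2 * max (w i) 1 : ℕ) : ℝ) :=
        Nat.cast_le.mpr (h2nat d hd i)
      have h2 : (0:ℝ) < ((max (vmk d i) 1 : ℕ) : ℝ) := by
        have : (1:ℕ) ≤ max (vmk d i) 1 := le_max_right _ _
        exact_mod_cast Nat.lt_of_lt_of_le Nat.zero_lt_one this
      have h3 := Real.log_le_log h2 h1
      have h4 : ((2 * max (w i) 1 : ℕ) : ℝ) = 2 * ((max (w i) 1 : ℕ) : ℝ) := by push_cast; ring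
      rw [h4] at h3
      rwa [Real.log_mul (by norm_num) (by
        have : (1:ℕ) ≤ max (w i) 1 := le_max_right _ _
        exact_mod_cast Nat.one_le_iff_ne_zero.mp this)] at h3
    calc ∑ i, Real.log ((max (vmk d i) 1 : ℕ) : ℝ)
        ≤ ∑ i, (Real.log 2 + Real.log ((max (w i) 1 : ℕ) : ℝ)) :=
          Finset.sum_le_sum fun i _ => hterm i
      _ = (K:ℝ) * Real.log 2 + ∑ i, Real.log ((max (w i) 1 : ℕ) : ℝ) := by
          rw [Finset.sum_add_distrib, Finset.sum_const, Finset.card_univ, Fintype.card_fin]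
          simp [nsmul_eq_mul]
  -- the target set
  set A : Set (Fin K → ℕ) := {v : Fin K → ℕ |
      (∑ ℓ, v ℓ = n - 1) ∧
      2 * Real.log 2 * ((n : ℝ) - 1) - (K:ℝ) / 4 ≤ ∑ ℓ, rhoFn ((u ℓ : ℕ) : ℝ) ((v ℓ : ℕ) : ℝ) ∧
      (∑ ℓ, Real.log ((max (v ℓ) 1 : ℕ) : ℝ)) ≤
        (K:ℝ) * Real.log 2 + ∑ ℓ, Real.log ((max (u ℓ) 1 : ℕ) : ℝ)} with hAdef
  have hsubset : ↑(Dset.image Φ) ⊆ A := by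
    intro v hv
    rw [Finset.coe_image] at hv
    obtain ⟨d, hd, rfl⟩ := hv
    have hdD : d ∈ Dset := hd
    refine ⟨?_, hC1 d hdD, hC2 d hdD⟩
    have : ∑ ℓ, Φ d ℓ = ∑ i, vmk d i := Equiv.sum_comp σ.symm (vmk d)
    rw [this, hsumv d hdD]
  have hAfin : A.Finite := by
    apply Set.Finite.subset
      (Finset.finite_toSet (Fintype.piFinset fun _ : Fin K => Finset.Iic (n - 1)))
    intro v hv
    rw [Finset.mem_coe, Fintype.mem_piFinset]
    intro i
    rw [Finset.mem_Iic]
    calc v i ≤ ∑ ℓ, v ℓ :=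
          Finset.single_le_sum (fun j _ => Nat.zero_le (v j)) (Finset.mem_univ i)
      _ = n - 1 := hv.1
  -- injectivity
  have hinj : Set.InjOn Φ ↑Dset := by
    intro d hd e he h
    have hdD : d ∈ Dset := hd
    have heD : e ∈ Dset := he
    have hv : ∀ i, vmk d i = vmk e i := by
      intro i
      have := congrFun h (σ i)
      simpa [hΦdef] using this
    have hind : ∀ m : ℕ, ∀ i : Fin K, (i:ℕ) = m → d i = e i := by
      intro m
      induction m with
      | zero =>
        intro i hi
        have hprev : (i - 1 : Fin K) = lst := by
          apply Fin.ext
          rw [prev_val i, if_pos hi]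
        have h1 := hvmk_add d hdD i
        have h2 := hvmk_add e heD i
        rw [hprev, hdlast d hdD] at h1
        rw [hprev, hdlast e heD] at h2
        have h3 := hv i
        omega
      | succ m ih =>
        intro i hi
        have h0 : (i:ℕ) ≠ 0 := by omega
        have hprev : ((i - 1 : Fin K):ℕ) = m := by
          rw [prev_val i, if_neg h0]; omega
        have h4 := ih (i-1) hprev
        have h1 := hvmk_add d hdD i
        have h2 := hvmk_add e heD i
        have h3 := hv i
        omega
    funext i
    exact hind (i:ℕ) i rfl
  -- cardinality chain
  have hcard1 : Dset.card = ∏ i, (b i + 1) := by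
    rw [hDdef, Fintype.card_piFinset]
    simp [Nat.card_Iic]
  have hcard2 : (Dset.image Φ).card = Dset.card := Finset.card_image_of_injOn hinj
  have hncard : (∏ i, (b i + 1)) ≤ Nat.card {v : Fin K → ℕ //
      (∑ ℓ, v ℓ = n - 1) ∧
      2 * Real.log 2 * ((n : ℝ) - 1) - (K:ℝ) / 4 ≤ ∑ ℓ, rhoFn ((u ℓ : ℕ) : ℝ) ((v ℓ : ℕ) : ℝ) ∧
      (∑ ℓ, Real.log ((max (v ℓ) 1 : ℕ) : ℝ)) ≤
        (K:ℝ) * Real.log 2 + ∑ ℓ, Real.log ((max (u ℓ) 1 : ℕ) : ℝ)} := by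
    have e1 : Nat.card {v : Fin K → ℕ //
        (∑ ℓ, v ℓ = n - 1) ∧
        2 * Real.log 2 * ((n : ℝ) - 1) - (K:ℝ) / 4 ≤ ∑ ℓ, rhoFn ((u ℓ : ℕ) : ℝ) ((v ℓ : ℕ) : ℝ) ∧
        (∑ ℓ, Real.log ((max (v ℓ) 1 : ℕ) : ℝ)) ≤
          (K:ℝ) * Real.log 2 + ∑ ℓ, Real.log ((max (u ℓ) 1 : ℕ) : ℝ)} = A.ncard :=
      Nat.card_coe_set_eq A
    rw [e1, ← hcard1, ← hcard2, ← Set.ncard_coe_finset]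
    exact Set.ncard_le_ncard hsubset hAfin
  -- the exponent bound
  set g : Fin K → ℝ := fun i => Real.log ((max (w i) 1 : ℕ) : ℝ) with hgdef
  set G : Fin K → ℝ := fun ℓ => Real.log ((max (u ℓ) 1 : ℕ) : ℝ) with hGdef
  have hgpos : ∀ i, (0:ℝ) < ((max (w i) 1 : ℕ) : ℝ) := by
    intro i
    have : (1:ℕ) ≤ max (w i) 1 := le_max_right _ _
    exact_mod_cast Nat.lt_of_lt_of_le Nat.zero_lt_one this
  have hg_le : ∀ i, g i ≤ g lst := by
    intro i
    apply Real.log_le_log (hgpos i)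
    exact_mod_cast Nat.cast_le.mpr (max_le_max (hwmono (hle_lst i)) le_rfl)
  have hGg : ∀ ℓ, G ℓ = g (σ.symm ℓ) := by
    intro ℓ
    simp only [hgdef, hGdef, hwdef, Equiv.apply_symm_apply]
  have hsup : (⨆ ℓ, G ℓ) = g lst := by
    apply le_antisymm
    · apply ciSup_le
      intro ℓ
      rw [hGg ℓ]
      exact hg_le _
    · have hbdd : BddAbove (Set.range G) := Set.Finite.bddAbove (Set.finite_range G)
      have := le_ciSup hbdd (σ lst)
      have hGs : G (σ lst) = g lst := by
        simp only [hgdef, hGdef, hwdef]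
      linarith
  have hsumG : ∑ ℓ, G ℓ = ∑ i, g i := by
    rw [← Equiv.sum_comp σ G]
  -- per-term bound on log (a i + 1)
  have hlog_ab : ∀ i, g i / 2 - Real.log 2 ≤ Real.log (((a i + 1 : ℕ) : ℕ) : ℝ) := by
    intro i
    exact log_half_bound (w i)
  -- final sum inequality
  have hfinal : (1/2) * ((∑ i, g i) - g lst) - Real.log 2 * K
      ≤ ∑ i, Real.log (((b i + 1 : ℕ) : ℕ) : ℝ) := by
    have he1 : (∑ i, g i) - g lst = ∑ i ∈ Finset.univ.erase lst, g i := by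
      rw [← Finset.add_sum_erase _ g (Finset.mem_univ lst)]
      ring
    have he2 : ∑ i, Real.log (((b i + 1 : ℕ) : ℕ) : ℝ)
        = ∑ i ∈ Finset.univ.erase lst, Real.log (((a i + 1 : ℕ) : ℕ) : ℝ) := by
      rw [← Finset.add_sum_erase _ (fun i => Real.log (((b i + 1 : ℕ) : ℕ) : ℝ))
        (Finset.mem_univ lst)]
      have hblst : Real.log (((b lst + 1 : ℕ) : ℕ) : ℝ) = 0 := by
        simp [hbdef]
      rw [hblst, zero_add]
      refine Finset.sum_congr rfl fun i hi => ?_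
      have hne : i ≠ lst := Finset.ne_of_mem_erase hi
      simp [hbdef, hne]
    have hcarde : (Finset.univ.erase lst).card = K - 1 := by
      rw [Finset.card_erase_of_mem (Finset.mem_univ lst), Finset.card_univ, Fintype.card_fin]
    rw [he1, he2]
    have h3 : ∑ i ∈ Finset.univ.erase lst, (g i / 2 - Real.log 2)
        ≤ ∑ i ∈ Finset.univ.erase lst, Real.log (((a i + 1 : ℕ) : ℕ) : ℝ) :=
      Finset.sum_le_sum fun i _ => hlog_ab i
    have h4 : ∑ i ∈ Finset.univ.erase lst, (g i / 2 - Real.log 2)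
        = (1/2) * (∑ i ∈ Finset.univ.erase lst, g i) - ((K:ℝ) - 1) * Real.log 2 := by
      have hc : ((K - 1 : ℕ) : ℝ) = (K:ℝ) - 1 := by
        rw [Nat.cast_sub hK]; simp
      rw [Finset.sum_sub_distrib, Finset.sum_const, hcarde, nsmul_eq_mul, hc,
        ← Finset.sum_div]
      ring
    have hlog2 : (0:ℝ) ≤ Real.log 2 := Real.log_nonneg (by norm_num)
    nlinarith [h3, h4]
  -- finish
  have hprodpos : (0:ℝ) < ((∏ i, (b i + 1) : ℕ) : ℝ) := by
    have h : 0 < ∏ i, (b i + 1) := Finset.prod_pos fun i _ => Nat.succ_pos _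
    exact_mod_cast h
  have hlogprod : Real.log ((∏ i, (b i + 1) : ℕ) : ℝ)
      = ∑ i, Real.log (((b i + 1 : ℕ) : ℕ) : ℝ) := by
    rw [Nat.cast_prod]
    exact Real.log_prod (fun i _ => by positivity)
  have hExp : Real.exp ((1/2) * ((∑ i, g i) - g lst) - Real.log 2 * K)
      ≤ ((∏ i, (b i + 1) : ℕ) : ℝ) := by
    rw [← Real.le_log_iff_exp_le hprodpos, hlogprod]
    exact hfinal
  rw [hsumG] at hncard
  rw [hsumG, hsup]
  exact le_trans hExp (Nat.cast_le.mpr hncard)
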